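/- Let X be a finite-dimensional real normed vector space and let μ be a Borel measure on X with nonempty support, finite on all closed balls, such that supp μ has no isolated points and for every x ∈ supp μ the function r ↦ μ(B(x,r)) is continuous on (0, ∞). Then there is no locally μ-integrable function f such that M^c_μ f(x) = M_μ f(x) for every x ∈ supp μ and, simultaneously, every local minimum point of the restriction of M_μ f to supp μ is a strict local minimum point. -/

import Mathlib

set_option linter.unusedSectionVars false
set_option linter.unusedVariables false


open MeasureTheory Metric Filter Topology

variable {X : Type*}

/-- The average of `|f|` over the closed ball of center `c` and radius `r`. -/
noncomputable def ballAvg [MetricSpace X] [MeasurableSpace X]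
    (μ : Measure X) (f : X → ℝ) (c : X) (r : ℝ) : ℝ :=
  (μ (closedBall c r)).toReal⁻¹ * ∫ y in closedBall c r, |f y| ∂μ

/-- The uncentered Hardy–Littlewood maximal function: the supremum of the averages of `|f|`
over all closed balls of positive measure containing `x`. -/
noncomputable def maximalU [MetricSpace X] [MeasurableSpace X]
    (μ : Measure X) (f : X → ℝ) (x : X) : ℝ :=
  sSup {a : ℝ | ∃ c : X, ∃ r : ℝ, x ∈ closedBall c r ∧ 0 < μ (closedBall c r) ∧
    a = ballAvg μ f c r}

/-- The centered Hardy–Littlewood maximal function: the supremum of the averages of `|f|`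
over all closed balls of positive measure centered at `x`. -/
noncomputable def maximalC [MetricSpace X] [MeasurableSpace X]
    (μ : Measure X) (f : X → ℝ) (x : X) : ℝ :=
  sSup {a : ℝ | ∃ r : ℝ, 0 < r ∧ 0 < μ (closedBall x r) ∧ a = ballAvg μ f x r}

/-- The support of a measure: points all of whose neighborhoods have positive measure. -/
def msupport [MetricSpace X] [MeasurableSpace X] (μ : Measure X) : Set X :=
  {x : X | ∀ r : ℝ, 0 < r → 0 < μ (ball x r)}

section AuxHL

variable [NormedAddCommGroup X] [NormedSpace ℝ X] [FiniteDimensional ℝ X]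
  [MeasurableSpace X] [BorelSpace X]

/-- The family of averages over balls containing `x` (the uncentered family). -/
def UsetHL (μ : Measure X) (f : X → ℝ) (x : X) : Set ℝ :=
  {a : ℝ | ∃ c : X, ∃ r : ℝ, x ∈ closedBall c r ∧ 0 < μ (closedBall c r) ∧
    a = ballAvg μ f c r}

/-- The family of averages over balls centered at `x`. -/
def CsetHL (μ : Measure X) (f : X → ℝ) (x : X) : Set ℝ :=
  {a : ℝ | ∃ r : ℝ, 0 < r ∧ 0 < μ (closedBall x r) ∧ a = ballAvg μ f x r}

lemma maximalU_def (μ : Measure X) (f : X → ℝ) (x : X) :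
    maximalU μ f x = sSup (UsetHL μ f x) := rfl

lemma maximalC_def (μ : Measure X) (f : X → ℝ) (x : X) :
    maximalC μ f x = sSup (CsetHL μ f x) := rfl

lemma ballAvg_nonneg (μ : Measure X) (f : X → ℝ) (c : X) (r : ℝ) :
    0 ≤ ballAvg μ f c r :=
  mul_nonneg (inv_nonneg.2 ENNReal.toReal_nonneg) (integral_nonneg fun _ => abs_nonneg _)

lemma msupport_closedBall_pos {μ : Measure X} {x : X} (hx : x ∈ msupport μ) {r : ℝ}
    (hr : 0 < r) : 0 < μ (closedBall x r) :=
  lt_of_lt_of_le (hx r hr) (measure_mono ball_subset_closedBall)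

lemma UsetHL_nonempty {μ : Measure X} (f : X → ℝ) {x : X} (hx : x ∈ msupport μ) :
    (UsetHL μ f x).Nonempty :=
  ⟨ballAvg μ f x 1, x, 1, mem_closedBall_self zero_le_one,
    msupport_closedBall_pos hx one_pos, rfl⟩

lemma CsetHL_nonempty {μ : Measure X} (f : X → ℝ) {x : X} (hx : x ∈ msupport μ) :
    (CsetHL μ f x).Nonempty :=
  ⟨ballAvg μ f x 1, 1, one_pos, msupport_closedBall_pos hx one_pos, rfl⟩

lemma maximalU_nonneg (μ : Measure X) (f : X → ℝ) (x : X) : 0 ≤ maximalU μ f x := by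
  rw [maximalU_def]
  refine Real.sSup_nonneg fun a ha => ?_
  obtain ⟨c, r, _, _, rfl⟩ := ha
  exact ballAvg_nonneg μ f c r

lemma le_maximalU {μ : Measure X} {f : X → ℝ} {x : X} (hb : BddAbove (UsetHL μ f x))
    {a : ℝ} (ha : a ∈ UsetHL μ f x) : a ≤ maximalU μ f x := le_csSup hb ha

lemma maximalU_of_not_bddAbove {μ : Measure X} {f : X → ℝ} {x : X}
    (h : ¬ BddAbove (UsetHL μ f x)) : maximalU μ f x = 0 := by
  rw [maximalU_def]; exact Real.sSup_of_not_bddAbove h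

lemma ballAvg_mem_UsetHL {μ : Measure X} (f : X → ℝ) {x c : X} {r : ℝ}
    (hm : x ∈ closedBall c r) (hμ : 0 < μ (closedBall c r)) :
    ballAvg μ f c r ∈ UsetHL μ f x := ⟨c, r, hm, hμ, rfl⟩

lemma integrableOn_abs_closedBall {μ : Measure X} {f : X → ℝ}
    (hloc : LocallyIntegrable f μ) (c : X) (r : ℝ) :
    IntegrableOn (fun y => |f y|) (closedBall c r) μ := by
  haveI : ProperSpace X := FiniteDimensional.proper ℝ X
  exact (hloc.integrableOn_isCompact (isCompact_closedBall c r)).abs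

lemma integral_ballAvg {μ : Measure X} (f : X → ℝ) {c : X} {r : ℝ}
    (h0 : μ (closedBall c r) ≠ 0) (hfin : μ (closedBall c r) ≠ ⊤) :
    ∫ y in closedBall c r, |f y| ∂μ = (μ (closedBall c r)).toReal * ballAvg μ f c r := by
  rw [ballAvg, ← mul_assoc, mul_inv_cancel₀ (ENNReal.toReal_ne_zero.2 ⟨h0, hfin⟩), one_mul]

/-- If `|f|` is a.e. at least `c` on a set of positive finite measure, and the integral is
at most `c` times the measure, then `|f| = c` a.e. on the set. -/
lemma ae_eq_of_avg_le {μ : Measure X} {f : X → ℝ} {B : Set X}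
    (hB : MeasurableSet B) (h0 : μ B ≠ 0) (hfin : μ B ≠ ⊤)
    (hI : IntegrableOn (fun y => |f y|) B μ) {c : ℝ}
    (hge : ∀ᵐ w ∂μ.restrict B, c ≤ |f w|)
    (hle : ∫ y in B, |f y| ∂μ ≤ c * (μ B).toReal) :
    ∀ᵐ w ∂μ.restrict B, |f w| = c := by
  have hconst : IntegrableOn (fun _ : X => c) B μ :=
    integrableOn_const hfin
  have hint : Integrable (fun y => |f y| - c) (μ.restrict B) := hI.sub hconst
  have hnn : 0 ≤ᵐ[μ.restrict B] fun y => |f y| - c := by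
    filter_upwards [hge] with w hw
    simp only [Pi.zero_apply, sub_nonneg]
    exact hw
  have hsub : ∫ y in B, (|f y| - c) ∂μ = ∫ y in B, |f y| ∂μ - c * (μ B).toReal := by
    rw [integral_sub hI hconst, setIntegral_const, smul_eq_mul, mul_comm, measureReal_def]
  have hz : ∫ y in B, (|f y| - c) ∂μ = 0 :=
    le_antisymm (by rw [hsub]; linarith) (integral_nonneg_of_ae hnn)
  have hzero := (integral_eq_zero_iff_of_nonneg_ae hnn hint).1 hz
  filter_upwards [hzero] with w hw
  have hw' : |f w| - c = 0 := hw
  linarith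

/-- A set of points which are mutually separated (relative to a positive, pointwise radius
function) is countable. -/
lemma countable_of_mutual_sep {s : Set X} {ρ : X → ℝ} (hρ : ∀ x ∈ s, 0 < ρ x)
    (hsep : ∀ x ∈ s, ∀ y ∈ s, x ≠ y → ¬(dist x y ≤ ρ x ∧ dist x y ≤ ρ y)) :
    s.Countable := by
  haveI : ProperSpace X := FiniteDimensional.proper ℝ X
  have hcov : s = ⋃ n : ℕ, {x ∈ s | 1 / (n + 1 : ℝ) < ρ x} := by
    ext x
    simp only [Set.mem_iUnion, Set.mem_setOf_eq]
    constructor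
    · intro hx
      obtain ⟨n, hn⟩ := exists_nat_one_div_lt (hρ x hx)
      exact ⟨n, hx, hn⟩
    · rintro ⟨n, hx, _⟩
      exact hx
  rw [hcov]
  refine Set.countable_iUnion fun n => ?_
  have hδ : (0:ℝ) < 1 / (2 * (n + 1 : ℝ)) := by positivity
  have hdisj : ({x ∈ s | 1 / (n + 1 : ℝ) < ρ x}).PairwiseDisjoint
      (fun x => ball x (1 / (2 * (n + 1 : ℝ)))) := by
    intro x hx y hy hxy
    have hd : 1 / (n + 1 : ℝ) < dist x y := by
      rcases not_and_or.1 (hsep x hx.1 y hy.1 hxy) with h | h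
      · exact lt_trans hx.2 (not_le.1 h)
      · exact lt_trans hy.2 (not_le.1 h)
    refine Set.disjoint_left.2 fun z hzx hzy => ?_
    have h1 : dist x z < 1 / (2 * (n + 1 : ℝ)) := by
      rw [dist_comm]; exact mem_ball.1 hzx
    have h2 : dist z y < 1 / (2 * (n + 1 : ℝ)) := mem_ball.1 hzy
    have h3 := dist_triangle x z y
    have h4 : (2:ℝ) / (2 * ((n:ℝ) + 1)) = 1 / ((n:ℝ) + 1) := by
      rw [show (2:ℝ) = 2 * 1 by ring]
      rw [show (2:ℝ) * 1 * ((n:ℝ) + 1) = 2 * ((n:ℝ) + 1) by ring]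
      exact mul_div_mul_left 1 ((n:ℝ) + 1) two_ne_zero
    have h5 : 1 / (2 * ((n:ℝ) + 1)) + 1 / (2 * ((n:ℝ) + 1)) = 2 / (2 * ((n:ℝ) + 1)) := by
      rw [← add_div]
      norm_num
    linarith
  exact hdisj.countable_of_isOpen (fun x _ => isOpen_ball)
    (fun x _ => ⟨x, mem_ball_self hδ⟩)

/-- Almost every point lies in the support of the measure. -/
lemma ae_mem_msupport (μ : Measure X) : ∀ᵐ x ∂μ, x ∈ msupport μ := by
  haveI : ProperSpace X := FiniteDimensional.proper ℝ X
  obtain ⟨b, hbc, -, hbasis⟩ := TopologicalSpace.exists_countable_basis X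
  rw [ae_iff]
  have hsub : {x | ¬ x ∈ msupport μ} ⊆ ⋃₀ {s ∈ b | μ s = 0} := by
    intro x hx
    simp only [msupport, Set.mem_setOf_eq, not_forall] at hx
    obtain ⟨r, hr, hμr⟩ := hx
    have hμr' : μ (ball x r) = 0 := by
      by_contra h
      exact hμr (pos_iff_ne_zero.2 h)
    obtain ⟨s, hs, hxs, hss⟩ := hbasis.exists_subset_of_mem_open (mem_ball_self hr) isOpen_ball
    exact ⟨s, ⟨hs, measure_mono_null hss hμr'⟩, hxs⟩
  refine measure_mono_null hsub ?_
  rw [measure_sUnion_null_iff (hbc.mono (Set.sep_subset _ _))]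
  exact fun s hs => hs.2

/-- Under the hypotheses of the main theorem the measure has no atoms. -/
lemma msupport_noAtoms (μ : Measure X)
    (hfin : ∀ (c : X) (r : ℝ), μ (closedBall c r) < ⊤)
    (hnoiso : ∀ x ∈ msupport μ, ∀ r : ℝ, 0 < r → ∃ y ∈ msupport μ, y ≠ x ∧ dist y x < r)
    (hcont : ∀ x ∈ msupport μ,
      ContinuousOn (fun r : ℝ => μ (closedBall x r)) (Set.Ioi (0 : ℝ)))
    (z : X) : μ {z} = 0 := by
  by_contra h
  have hzpos : 0 < μ {z} := pos_iff_ne_zero.2 h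
  have hz : z ∈ msupport μ := fun r hr =>
    lt_of_lt_of_le hzpos (measure_mono (Set.singleton_subset_iff.2 (mem_ball_self hr)))
  obtain ⟨y, hy, hyz, -⟩ := hnoiso z hz 1 one_pos
  set e := dist z y with he
  have hepos : 0 < e := dist_pos.2 fun hzy => hyz hzy.symm
  set u : ℕ → ℝ := fun n => e - e / (n + 2) with hu
  have hu_lt : ∀ n, u n < e := by
    intro n
    have : 0 < e / (n + 2 : ℝ) := by positivity
    simp only [hu]
    linarith
  have hu_pos : ∀ n, 0 < u n := by
    intro n
    have h1 : e / (n + 2 : ℝ) < e := by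
      rw [div_lt_iff₀ (by positivity)]
      nlinarith [hepos, (Nat.cast_nonneg n : (0:ℝ) ≤ n)]
    simp only [hu]
    linarith
  have hu_tend : Tendsto u atTop (𝓝 e) := by
    have h2 : Tendsto (fun n : ℕ => e / ((n : ℝ) + 2)) atTop (𝓝 0) := by
      refine Tendsto.div_atTop tendsto_const_nhds ?_
      exact tendsto_atTop_add_const_right atTop 2 tendsto_natCast_atTop_atTop
    have h3 := Tendsto.sub (tendsto_const_nhds : Tendsto (fun _ : ℕ => e) atTop (𝓝 e)) h2
    simpa using h3
  have htend : Tendsto (fun n => μ (closedBall y (u n))) atTop (𝓝 (μ (closedBall y e))) := by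
    have h1 : Tendsto u atTop (𝓝[Set.Ioi (0:ℝ)] e) :=
      tendsto_nhdsWithin_of_tendsto_nhds_of_eventually_within _ hu_tend
        (Eventually.of_forall fun n => Set.mem_Ioi.2 (hu_pos n))
    exact ((hcont y hy e (Set.mem_Ioi.2 hepos)).tendsto).comp h1
  have hineq : ∀ n, μ (closedBall y (u n)) + μ {z} ≤ μ (closedBall y e) := by
    intro n
    have hdisj : Disjoint (closedBall y (u n)) {z} := by
      rw [Set.disjoint_singleton_right, mem_closedBall]
      refine not_le.2 ?_
      calc u n < e := hu_lt n
      _ = dist z y := he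
    rw [← measure_union hdisj (measurableSet_singleton z)]
    refine measure_mono (Set.union_subset (closedBall_subset_closedBall (hu_lt n).le) ?_)
    rw [Set.singleton_subset_iff, mem_closedBall]
  have hlim : μ (closedBall y e) + μ {z} ≤ μ (closedBall y e) :=
    le_of_tendsto (htend.add tendsto_const_nhds) (Eventually.of_forall hineq)
  exact absurd hlim (not_le.2 (ENNReal.lt_add_right (hfin y e).ne h))

/-- The key pointwise lemma: at a point of the support where the maximal function is a
genuine (bounded) supremum coinciding with the centered maximal function, if there are
points of smaller value arbitrarily close by (with bounded uncentered families), then the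
centered averages converge (along a suitable sequence of small radii) to the value of the
maximal function; combined with Lebesgue differentiation this forces `|f w| = M f w`. -/
lemma abs_eq_maximalU_of_spike {μ : Measure X} {f : X → ℝ} {w : X}
    (hw : w ∈ msupport μ)
    (hbw : BddAbove (UsetHL μ f w))
    (heqw : maximalC μ f w = maximalU μ f w)
    (hW : Tendsto (fun t => ballAvg μ f w t) (𝓝[>] (0:ℝ)) (𝓝 |f w|))
    (hnear : ∀ δ : ℝ, 0 < δ → ∃ w', w' ∈ msupport μ ∧ 0 < dist w' w ∧ dist w' w ≤ δ ∧
      BddAbove (UsetHL μ f w') ∧ maximalU μ f w' < maximalU μ f w) :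
    |f w| = maximalU μ f w := by
  have hub : ∀ t : ℝ, 0 < t → ballAvg μ f w t ≤ maximalU μ f w := fun t ht =>
    le_maximalU hbw (ballAvg_mem_UsetHL f (mem_closedBall_self ht.le)
      (msupport_closedBall_pos hw ht))
  have hle : |f w| ≤ maximalU μ f w :=
    le_of_tendsto hW (eventually_nhdsWithin_of_forall fun t ht => hub t (Set.mem_Ioi.1 ht))
  refine le_antisymm hle ?_
  by_contra hcon
  push_neg at hcon
  set ε : ℝ := (maximalU μ f w - |f w|) / 2 with hεdef
  have hε : 0 < ε := by simp only [hεdef]; linarith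
  have key : ∀ δ : ℝ, 0 < δ → ∃ t : ℝ, 0 < t ∧ t ≤ δ ∧
      maximalU μ f w - ε < ballAvg μ f w t := by
    intro δ hδ
    obtain ⟨w', hw's, hd0, hdδ, hbw', hglt⟩ := hnear δ hδ
    set ε' : ℝ := min ε (maximalU μ f w - maximalU μ f w') with hε'def
    have hε'pos : 0 < ε' := lt_min hε (sub_pos.2 hglt)
    have hlt2 : maximalU μ f w - ε' < sSup (CsetHL μ f w) := by
      rw [← maximalC_def, heqw]
      linarith
    obtain ⟨a, haC, halt⟩ := exists_lt_of_lt_csSup (CsetHL_nonempty f hw) hlt2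
    obtain ⟨t, ht, hμt, rfl⟩ := haC
    have htlt : t < dist w' w := by
      by_contra hge
      have hmem : ballAvg μ f w t ∈ UsetHL μ f w' :=
        ballAvg_mem_UsetHL f (mem_closedBall.2 (not_lt.1 hge)) hμt
      have h1 : ballAvg μ f w t ≤ maximalU μ f w' := le_maximalU hbw' hmem
      have h2 : ε' ≤ maximalU μ f w - maximalU μ f w' :=
        min_le_right ε (maximalU μ f w - maximalU μ f w')
      linarith
    have h3 : ε' ≤ ε := min_le_left _ _
    exact ⟨t, ht, le_trans htlt.le hdδ, by linarith⟩
  choose t ht0 htle hta using fun k : ℕ => key (1 / (k + 1 : ℝ)) (by positivity)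
  have htt : Tendsto t atTop (𝓝[>] (0:ℝ)) := by
    refine tendsto_nhdsWithin_of_tendsto_nhds_of_eventually_within _ ?_
      (Eventually.of_forall fun k => Set.mem_Ioi.2 (ht0 k))
    exact squeeze_zero (fun k => (ht0 k).le) htle tendsto_one_div_add_atTop_nhds_zero_nat
  have hge : maximalU μ f w - ε ≤ |f w| :=
    ge_of_tendsto (hW.comp htt) (Eventually.of_forall fun k => (hta k).le)
  simp only [hεdef] at hge
  linarith

end AuxHL

/-- On a finite-dimensional normed space, for a measure whose support has no isolated points
and whose ball-measure functions are continuous on `(0, ∞)`, there is no locally integrable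
function `f` with `M^c_μ f = M_μ f` on the support such that every local minimum point of
`M_μ f` restricted to the support is a strict local minimum point. -/
theorem no_function_with_centered_eq_uncentered_and_strict_minima
    [NormedAddCommGroup X] [NormedSpace ℝ X] [FiniteDimensional ℝ X]
    [MeasurableSpace X] [BorelSpace X]
    (μ : Measure X)
    (hsupp : (msupport μ).Nonempty)
    (hfin : ∀ (c : X) (r : ℝ), μ (closedBall c r) < ⊤)
    (hnoiso : ∀ x ∈ msupport μ, ∀ r : ℝ, 0 < r → ∃ y ∈ msupport μ, y ≠ x ∧ dist y x < r)
    (hcont : ∀ x ∈ msupport μ,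
      ContinuousOn (fun r : ℝ => μ (closedBall x r)) (Set.Ioi (0 : ℝ))) :
    ¬ ∃ f : X → ℝ, LocallyIntegrable f μ ∧
      (∀ x ∈ msupport μ, maximalC μ f x = maximalU μ f x) ∧
      (∀ x₀ ∈ msupport μ,
        (∃ r : ℝ, 0 < r ∧ ∀ y ∈ msupport μ, dist y x₀ ≤ r →
          maximalU μ f x₀ ≤ maximalU μ f y) →
        (∃ r : ℝ, 0 < r ∧ ∀ y ∈ msupport μ, dist y x₀ ≤ r → y ≠ x₀ →
          maximalU μ f x₀ < maximalU μ f y)) := by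
  rintro ⟨f, hloc, heq, hstr⟩
  haveI : ProperSpace X := FiniteDimensional.proper ℝ X
  haveI : IsLocallyFiniteMeasure μ :=
    ⟨fun x => ⟨closedBall x 1, closedBall_mem_nhds x one_pos, hfin x 1⟩⟩
  haveI : NullSingletonClass μ := ⟨msupport_noAtoms μ hfin hnoiso hcont⟩
  -- the "premise" predicate: being a local minimum point of `M f` on the support
  set P : X → Prop := fun x => ∃ r : ℝ, 0 < r ∧ ∀ y ∈ msupport μ, dist y x ≤ r →
    maximalU μ f x ≤ maximalU μ f y with hPdef
  -- Lebesgue differentiation a.e. points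
  have habs : LocallyIntegrable (fun y => |f y|) μ := by
    rw [locallyIntegrable_iff]
    exact fun K hK => (hloc.integrableOn_isCompact hK).abs
  have hWae : ∀ᵐ w ∂μ, Tendsto (fun t => ballAvg μ f w t) (𝓝[>] (0:ℝ)) (𝓝 |f w|) := by
    filter_upwards [VitaliFamily.ae_tendsto_average (Besicovitch.vitaliFamily μ) habs]
      with w hw
    have h1 := hw.comp (Besicovitch.tendsto_filterAt μ w)
    refine h1.congr fun tt => ?_
    simp only [Function.comp_apply]
    rw [setAverage_eq, smul_eq_mul]
    rfl
  have hSae : ∀ᵐ w ∂μ, w ∈ msupport μ := ae_mem_msupport μ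
  -- local minimum points form a countable set
  set G : Set X := {x | x ∈ msupport μ ∧ P x} with hGdef
  have hstr' : ∀ x, x ∈ G → ∃ r : ℝ, 0 < r ∧ ∀ y ∈ msupport μ, dist y x ≤ r → y ≠ x →
      maximalU μ f x < maximalU μ f y := fun x hx => hstr x hx.1 hx.2
  choose! R hR0 hRstrict using hstr'
  have hGc : G.Countable := by
    refine countable_of_mutual_sep (fun x hx => hR0 x hx) ?_
    rintro x hx y hy hxy ⟨h1, h2⟩
    have ha : maximalU μ f x < maximalU μ f y :=
      hRstrict x hx y hy.1 (by rw [dist_comm]; exact h1) (Ne.symm hxy)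
    have hb : maximalU μ f y < maximalU μ f x :=
      hRstrict y hy x hx.1 h2 hxy
    linarith
  have hGnull : μ G = 0 := hGc.measure_zero μ
  have hGae : ∀ᵐ w ∂μ, w ∉ G := by
    rw [ae_iff]
    have hset : {a : X | ¬ a ∉ G} = G := by ext a; simp
    rw [hset]
    exact hGnull
  -- the "near" lemma: at a non-minimum point within a junk-free zone, there are strictly
  -- smaller values (with bounded uncentered family) arbitrarily close.
  have hnearGen : ∀ x : X, ∀ Rz : ℝ, 0 < Rz →
      (∀ u ∈ msupport μ, dist u x ≤ Rz → u ≠ x → BddAbove (UsetHL μ f u)) →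
      ∀ w ∈ msupport μ, w ≠ x → dist w x ≤ Rz / 4 → ¬ P w →
      ∀ δ : ℝ, 0 < δ → ∃ w', w' ∈ msupport μ ∧ 0 < dist w' w ∧ dist w' w ≤ δ ∧
        BddAbove (UsetHL μ f w') ∧ maximalU μ f w' < maximalU μ f w := by
    intro x Rz hRz hzone w hws hwx hwd hnp δ hδ
    simp only [hPdef] at hnp
    push_neg at hnp
    have hwx0 : 0 < dist w x := dist_pos.2 hwx
    have hρpos : 0 < min δ (dist w x / 2) := lt_min hδ (by linarith)
    obtain ⟨y, hy, hyd, hylt⟩ := hnp (min δ (dist w x / 2)) hρpos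
    have hyw : y ≠ w := by
      intro hh
      rw [hh] at hylt
      exact lt_irrefl _ hylt
    have hy1 : dist y w ≤ δ := le_trans hyd (min_le_left _ _)
    have hy2 : dist y w ≤ dist w x / 2 := le_trans hyd (min_le_right _ _)
    have hynex : y ≠ x := by
      intro hh
      rw [hh] at hy2
      have h3 := dist_triangle w x x
      have h4 : dist w x ≤ dist w x + dist x x := h3
      have h5 : dist x w = dist w x := dist_comm x w
      rw [dist_comm] at hy2
      linarith [hwx0]
    have hyzone : dist y x ≤ Rz := by
      have h3 := dist_triangle y w x
      have h4 : dist w x ≤ Rz / 4 := hwd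
      linarith
    exact ⟨y, hy, dist_pos.2 hyw, hy1, hzone y hy hyzone hynex, hylt⟩
  -- key step: no point of the support is a local minimum point
  have hkey : ∀ x, x ∈ msupport μ → ¬ P x := by
    intro x hx hPx
    obtain ⟨r₁, hr₁, hstrx⟩ := hstr x hx hPx
    have hzone : ∀ u ∈ msupport μ, dist u x ≤ r₁ → u ≠ x → BddAbove (UsetHL μ f u) := by
      intro u hu hud hune
      by_contra hbu
      have h0 : maximalU μ f u = 0 := maximalU_of_not_bddAbove hbu
      have h1 := hstrx u hu hud hune
      have h2 := maximalU_nonneg μ f x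
      linarith
    have ht : (0:ℝ) < r₁ / 5 := by linarith
    set B : Set X := closedBall x (r₁ / 5) with hBdef
    have hBmeas : MeasurableSet B := measurableSet_closedBall
    have hBpos : μ B ≠ 0 := (msupport_closedBall_pos hx ht).ne'
    have hBfin : μ B ≠ ⊤ := (hfin x (r₁ / 5)).ne
    have hxae : ∀ᵐ w ∂μ, w ≠ x := by
      rw [ae_iff]
      have hset : {a : X | ¬ a ≠ x} = {x} := by ext a; simp
      rw [hset]
      exact measure_singleton x
    -- a.e. identification on the zone
    have haeId : ∀ᵐ w ∂μ.restrict B,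
        |f w| = maximalU μ f w ∧ w ∈ msupport μ ∧ w ≠ x := by
      filter_upwards [ae_restrict_of_ae hSae, ae_restrict_of_ae hWae, ae_restrict_of_ae hGae,
        ae_restrict_of_ae hxae, ae_restrict_mem hBmeas] with w hws hWw hGw hwx hwB
      have hwB' : dist w x ≤ r₁ / 5 := mem_closedBall.1 hwB
      have hnp : ¬ P w := fun hPw => hGw ⟨hws, hPw⟩
      have hbw : BddAbove (UsetHL μ f w) := hzone w hws (by linarith) hwx
      have hnear := hnearGen x r₁ hr₁ hzone w hws hwx (by linarith) hnp
      exact ⟨abs_eq_maximalU_of_spike hws hbw (heq w hws) hWw hnear, hws, hwx⟩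
    by_cases hbx : BddAbove (UsetHL μ f x)
    · -- x has a bounded family : strictness fails by averaging
      have havg : ballAvg μ f x (r₁ / 5) ≤ maximalU μ f x :=
        le_maximalU hbx (ballAvg_mem_UsetHL f (mem_closedBall_self ht.le)
          (msupport_closedBall_pos hx ht))
      have haeGT : ∀ᵐ w ∂μ.restrict B, maximalU μ f x < |f w| := by
        filter_upwards [haeId, ae_restrict_mem hBmeas] with w hid hwB
        obtain ⟨hid1, hws, hwx⟩ := hid
        rw [hid1]
        exact hstrx w hws (le_trans (mem_closedBall.1 hwB) (by linarith)) hwx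
      have hIle : ∫ y in B, |f y| ∂μ ≤ maximalU μ f x * (μ B).toReal := by
        rw [integral_ballAvg f hBpos hBfin, mul_comm]
        exact mul_le_mul_of_nonneg_right havg ENNReal.toReal_nonneg
      have hpin := ae_eq_of_avg_le hBmeas hBpos hBfin (integrableOn_abs_closedBall hloc x _)
        (haeGT.mono fun w hw => hw.le) hIle
      haveI : (ae (μ.restrict B)).NeBot :=
        ae_neBot.2 fun h => hBpos (Measure.restrict_eq_zero.1 h)
      obtain ⟨w, hw1, hw2⟩ := (haeGT.and hpin).exists
      rw [hw2] at hw1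
      exact lt_irrefl _ hw1
    · -- x is a "junk" point : the centered family is unbounded, contradiction via pinning
      have hgx0 : maximalU μ f x = 0 := maximalU_of_not_bddAbove hbx
      have hCx : ¬ BddAbove (CsetHL μ f x) := by
        intro hC
        apply hbx
        have hCs : sSup (CsetHL μ f x) = 0 := by
          rw [← maximalC_def, heq x hx, hgx0]
        have hint0 : ∀ s : ℝ, 0 < s → ∫ y in closedBall x s, |f y| ∂μ = 0 := by
          intro s hs
          have hposs : 0 < μ (closedBall x s) := msupport_closedBall_pos hx hs
          have hmem : ballAvg μ f x s ∈ CsetHL μ f x := ⟨s, hs, hposs, rfl⟩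
          have h1 : ballAvg μ f x s ≤ 0 := by
            rw [← hCs]
            exact le_csSup hC hmem
          have h2 : ballAvg μ f x s = 0 := le_antisymm h1 (ballAvg_nonneg μ f x s)
          rw [integral_ballAvg f hposs.ne' (hfin x s).ne, h2, mul_zero]
        refine ⟨0, ?_⟩
        rintro a ⟨c', ρ, hmem, hcpos, rfl⟩
        have hρ0 : 0 ≤ ρ := le_trans dist_nonneg (mem_closedBall.1 hmem)
        rcases eq_or_lt_of_le hρ0 with hρe | hρlt
        · exfalso
          rw [← hρe, closedBall_zero] at hcpos
          rw [measure_singleton] at hcpos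
          exact lt_irrefl _ hcpos
        · have hsub : closedBall c' ρ ⊆ closedBall x (2 * ρ) := by
            intro z hz
            have h1 : dist z c' ≤ ρ := mem_closedBall.1 hz
            have h2 : dist x c' ≤ ρ := mem_closedBall.1 hmem
            have h3 := dist_triangle z c' x
            rw [mem_closedBall]
            rw [dist_comm x c'] at h2
            linarith
          have hle2 : ∫ y in closedBall c' ρ, |f y| ∂μ ≤
              ∫ y in closedBall x (2 * ρ), |f y| ∂μ :=
            setIntegral_mono_set (integrableOn_abs_closedBall hloc x (2 * ρ))
              (Eventually.of_forall fun y => abs_nonneg _) (Eventually.of_forall hsub)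
          have hI0 : ∫ y in closedBall c' ρ, |f y| ∂μ = 0 :=
            le_antisymm (by rw [← hint0 (2 * ρ) (by linarith)]; exact hle2)
              (integral_nonneg fun y => abs_nonneg _)
          rw [ballAvg, hI0, mul_zero]
      -- pinning at all small scales
      have hpinK : ∀ s : ℝ, 0 < s → s ≤ r₁ / 5 →
          ∀ᵐ w ∂μ.restrict (closedBall x s), |f w| = ballAvg μ f x s := by
        intro s hs hst
        have hBsmeas : MeasurableSet (closedBall x s) := measurableSet_closedBall
        have hBspos : μ (closedBall x s) ≠ 0 := (msupport_closedBall_pos hx hs).ne'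
        have hBsfin : μ (closedBall x s) ≠ ⊤ := (hfin x s).ne
        have haeGe : ∀ᵐ w ∂μ.restrict (closedBall x s), ballAvg μ f x s ≤ |f w| := by
          have hsubB : closedBall x s ⊆ B := closedBall_subset_closedBall hst
          filter_upwards [ae_restrict_of_ae_restrict_of_subset hsubB haeId,
            ae_restrict_mem hBsmeas] with w hid hwBs
          obtain ⟨hid1, hws, hwx⟩ := hid
          rw [hid1]
          have hd : dist w x ≤ r₁ := le_trans (mem_closedBall.1 hwBs) (by linarith)
          exact le_maximalU (hzone w hws hd hwx)
            (ballAvg_mem_UsetHL f hwBs (pos_iff_ne_zero.2 hBspos))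
        refine ae_eq_of_avg_le hBsmeas hBspos hBsfin
          (integrableOn_abs_closedBall hloc x s) haeGe (le_of_eq ?_)
        rw [integral_ballAvg f hBspos hBsfin, mul_comm]
      -- the centered family is in fact bounded : contradiction
      obtain ⟨w₀, hw₀s, hw₀ne, hw₀d⟩ := hnoiso x hx (r₁ / 5) ht
      have hbw₀ : BddAbove (UsetHL μ f w₀) :=
        hzone w₀ hw₀s (le_trans hw₀d.le (by linarith)) hw₀ne
      apply hCx
      refine ⟨max (ballAvg μ f x (r₁ / 5)) (maximalU μ f w₀), ?_⟩
      rintro a ⟨s, hs, hμs, rfl⟩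
      by_cases hst : s ≤ r₁ / 5
      · have h1 := hpinK s hs hst
        have h2 : ∀ᵐ w ∂μ.restrict (closedBall x s), |f w| = ballAvg μ f x (r₁ / 5) :=
          ae_restrict_of_ae_restrict_of_subset (closedBall_subset_closedBall hst)
            (hpinK (r₁ / 5) ht le_rfl)
        haveI : (ae (μ.restrict (closedBall x s))).NeBot :=
          ae_neBot.2 fun h =>
            (msupport_closedBall_pos hx hs).ne' (Measure.restrict_eq_zero.1 h)
        obtain ⟨w, e1, e2⟩ := (h1.and h2).exists
        refine le_max_of_le_left (le_of_eq ?_)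
        rw [← e1, e2]
      · push_neg at hst
        have hmem : ballAvg μ f x s ∈ UsetHL μ f w₀ :=
          ballAvg_mem_UsetHL f (mem_closedBall.2 (le_trans hw₀d.le hst.le)) hμs
        exact le_max_of_le_right (le_maximalU hbw₀ hmem)
  -- therefore every uncentered family is bounded
  have hbdd : ∀ x ∈ msupport μ, BddAbove (UsetHL μ f x) := by
    intro x hx
    by_contra hbx
    refine hkey x hx ⟨1, one_pos, fun y hy _ => ?_⟩
    rw [maximalU_of_not_bddAbove hbx]
    exact maximalU_nonneg μ f y
  -- the global a.e. identity |f| = M f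
  have hfg : ∀ᵐ w ∂μ, |f w| = maximalU μ f w ∧ w ∈ msupport μ := by
    filter_upwards [hSae, hWae, hGae] with w hws hWw hGw
    refine ⟨abs_eq_maximalU_of_spike hws (hbdd w hws) (heq w hws) hWw ?_, hws⟩
    intro δ hδ
    have hnp : ¬ P w := fun h => hGw ⟨hws, h⟩
    simp only [hPdef] at hnp
    push_neg at hnp
    obtain ⟨y, hy, hyd, hylt⟩ := hnp δ hδ
    have hyw : y ≠ w := by
      intro hh
      rw [hh] at hylt
      exact lt_irrefl _ hylt
    exact ⟨y, hy, dist_pos.2 hyw, hyd, hbdd y hy, hylt⟩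
  -- global pinning : |f| is a.e. constant
  obtain ⟨v, hv⟩ := hsupp
  have hpinV : ∀ n : ℕ, ∀ᵐ w ∂μ, w ∈ closedBall v ((n:ℝ) + 1) →
      |f w| = ballAvg μ f v ((n:ℝ) + 1) := by
    intro n
    have hs : (0:ℝ) < (n:ℝ) + 1 := by positivity
    have hBsm : MeasurableSet (closedBall v ((n:ℝ) + 1)) := measurableSet_closedBall
    have hpos : μ (closedBall v ((n:ℝ) + 1)) ≠ 0 := (msupport_closedBall_pos hv hs).ne'
    have hfin' : μ (closedBall v ((n:ℝ) + 1)) ≠ ⊤ := (hfin v _).ne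
    have haeGe : ∀ᵐ w ∂μ.restrict (closedBall v ((n:ℝ) + 1)),
        ballAvg μ f v ((n:ℝ) + 1) ≤ |f w| := by
      filter_upwards [ae_restrict_of_ae hfg, ae_restrict_mem hBsm] with w hid hwB
      obtain ⟨hid1, hws⟩ := hid
      rw [hid1]
      exact le_maximalU (hbdd w hws) (ballAvg_mem_UsetHL f hwB (pos_iff_ne_zero.2 hpos))
    have hres := ae_eq_of_avg_le hBsm hpos hfin'
      (integrableOn_abs_closedBall hloc v _) haeGe
      (le_of_eq (by rw [integral_ballAvg f hpos hfin', mul_comm]))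
    exact ae_imp_of_ae_restrict hres
  have hconst : ∀ n : ℕ, ballAvg μ f v ((n:ℝ) + 1) = ballAvg μ f v ((0:ℝ) + 1) := by
    intro n
    have hsm : MeasurableSet (closedBall v ((0:ℝ) + 1)) := measurableSet_closedBall
    have hpos1 : μ (closedBall v ((0:ℝ) + 1)) ≠ 0 :=
      (msupport_closedBall_pos hv (by norm_num)).ne'
    have h1 : ∀ᵐ w ∂μ.restrict (closedBall v ((0:ℝ) + 1)),
        |f w| = ballAvg μ f v ((0:ℝ) + 1) := by
      have h0 := hpinV 0
      simp only [Nat.cast_zero] at h0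
      filter_upwards [ae_restrict_of_ae h0, ae_restrict_mem hsm] with w h hw using h hw
    have h2 : ∀ᵐ w ∂μ.restrict (closedBall v ((0:ℝ) + 1)),
        |f w| = ballAvg μ f v ((n:ℝ) + 1) := by
      filter_upwards [ae_restrict_of_ae (hpinV n), ae_restrict_mem hsm] with w h hw
      refine h (closedBall_subset_closedBall ?_ hw)
      have : (0:ℝ) ≤ (n:ℝ) := Nat.cast_nonneg n
      linarith
    haveI : (ae (μ.restrict (closedBall v ((0:ℝ) + 1)))).NeBot :=
      ae_neBot.2 fun h => hpos1 (Measure.restrict_eq_zero.1 h)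
    obtain ⟨w, e1, e2⟩ := (h2.and h1).exists
    rw [← e1, e2]
  have hfc : ∀ᵐ w ∂μ, |f w| = ballAvg μ f v ((0:ℝ) + 1) := by
    filter_upwards [ae_all_iff.2 hpinV] with w hw
    obtain ⟨n, hn⟩ := exists_nat_ge (dist w v)
    have hwB : w ∈ closedBall v ((n:ℝ) + 1) := mem_closedBall.2 (by linarith)
    rw [hw n hwB, hconst n]
  have hgc : ∀ x ∈ msupport μ, maximalU μ f x = ballAvg μ f v ((0:ℝ) + 1) := by
    intro x hx
    have hU : UsetHL μ f x = {ballAvg μ f v ((0:ℝ) + 1)} := by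
      refine Set.eq_singleton_iff_nonempty_unique_mem.2 ⟨UsetHL_nonempty f hx, ?_⟩
      rintro a ⟨c', ρ, hmem, hcpos, rfl⟩
      have hρ0 : 0 ≤ ρ := le_trans dist_nonneg (mem_closedBall.1 hmem)
      rcases eq_or_lt_of_le hρ0 with hρe | hρlt
      · exfalso
        rw [← hρe, closedBall_zero, measure_singleton] at hcpos
        exact lt_irrefl _ hcpos
      · have hint : ∫ y in closedBall c' ρ, |f y| ∂μ =
            ∫ _ in closedBall c' ρ, ballAvg μ f v ((0:ℝ) + 1) ∂μ := by
          refine setIntegral_congr_ae measurableSet_closedBall ?_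
          filter_upwards [hfc] with w hw _ using hw
        rw [ballAvg, hint, setIntegral_const, smul_eq_mul, ← mul_assoc, measureReal_def,
          inv_mul_cancel₀ (ENNReal.toReal_ne_zero.2 ⟨hcpos.ne', (hfin c' ρ).ne⟩), one_mul]
    rw [maximalU_def, hU, csSup_singleton]
  exact hkey v hv ⟨1, one_pos, fun y hy _ => by rw [hgc v hv, hgc y hy]⟩
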